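/- Let Z be a tail of a nodal curve C with k_Z ≥ 3. Then there do not exist tails W ∈ T²_{i,j} and W' ∈ T³_{i,j}, each Z-terminal (Term_W ∩ Term_Z ≠ ∅ and Term_{W'} ∩ Term_Z ≠ ∅), with W ∪ W' ⊆ Z. -/

import Mathlib

open Set

/- Dual multigraph model of a nodal curve: vertices `V` are irreducible
components, edges `E` are nodes, with endpoint maps `s t : E → V`. -/

/-- The set of terminal points (edges of the cut) of a vertex subset `Z`. -/
def TermPts {V E : Type} (s t : E → V) (Z : Set V) : Set E :=
  {e | (s e ∈ Z ∧ t e ∉ Z) ∨ (t e ∈ Z ∧ s e ∉ Z)}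

/-- A subcurve is a nonempty proper subset of the components. -/
def Subcurve {V : Type} (Z : Set V) : Prop := Z.Nonempty ∧ Z ≠ Set.univ

/-- Connectivity of the induced sub-multigraph on `Z`. -/
def ConnOn {V E : Type} (s t : E → V) (Z : Set V) : Prop :=
  ∀ x ∈ Z, ∀ y ∈ Z,
    Relation.ReflTransGen
      (fun a b => a ∈ Z ∧ b ∈ Z ∧ ∃ e, (s e = a ∧ t e = b) ∨ (s e = b ∧ t e = a)) x y

/-- A tail is a subcurve with both sides connected. -/
def IsTail {V E : Type} (s t : E → V) (Z : Set V) : Prop :=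
  Subcurve Z ∧ ConnOn s t Z ∧ ConnOn s t Zᶜ

/-- `k_Z`, the number of terminal points of `Z`. -/
noncomputable def kcut {V E : Type} (s t : E → V) (Z : Set V) : ℕ :=
  (TermPts s t Z).ncard

/-- The pair `(Z, Z')` is free if the edge cuts are disjoint. -/
def FreePair {V E : Type} (s t : E → V) (Z Z' : Set V) : Prop :=
  TermPts s t Z ∩ TermPts s t Z' = ∅

/-- The pair `(Z, Z')` is perfect. -/
def PerfectPair {V : Type} (Z Z' : Set V) : Prop :=
  Z ⊆ Z' ∨ Z' ⊆ Z ∨ Zᶜ ⊆ Z' ∨ Z' ⊆ Zᶜ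
/-- `S²_{i,j}`: the 2-tails containing `vi, vj` and omitting `v1`. -/
def S2set {V E : Type} (s t : E → V) (v1 vi vj : V) : Set (Set V) :=
  {Z | IsTail s t Z ∧ kcut s t Z = 2 ∧ vi ∈ Z ∧ vj ∈ Z ∧ v1 ∉ Z}

/-- The levels of the inductive construction of the set of nested tails:
level `0` is `S` itself, and level `m+1` consists of the members `Z` of `S`
with `W_m ◁ Z`, where `W_m` is the intersection of the members of level `m`. -/
def Tlevel {V E : Type} (s t : E → V) (S : Set (Set V)) : ℕ → Set (Set V)
  | 0 => S
  | (m + 1) =>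
      {Z | Z ∈ S ∧ ⋂₀ Tlevel s t S m ⊂ Z ∧ FreePair s t (⋂₀ Tlevel s t S m) Z}

/-- The set of nested tails extracted from `S`: the tails `W_m = ⋂ (level m)`
for all `m` with level `m` nonempty. -/
def Tset {V E : Type} (s t : E → V) (S : Set (Set V)) : Set (Set V) :=
  {X | ∃ m, (Tlevel s t S m).Nonempty ∧ X = ⋂₀ Tlevel s t S m}

/-- `T²_{i,j}`, the set of nested 2-tails with respect to `(i, j)`. -/
def T2set {V E : Type} (s t : E → V) (v1 vi vj : V) : Set (Set V) :=
  Tset s t (S2set s t v1 vi vj)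

/-- `S³_{i,j}`: the `T²_{i,j}`-free 3-tails containing `vi, vj`, omitting `v1`. -/
def S3set {V E : Type} (s t : E → V) (v1 vi vj : V) : Set (Set V) :=
  {Z | IsTail s t Z ∧ kcut s t Z = 3 ∧ vi ∈ Z ∧ vj ∈ Z ∧ v1 ∉ Z ∧
        ∀ W ∈ T2set s t v1 vi vj, FreePair s t Z W}

/-- `T³_{i,j}`, the set of nested 3-tails with respect to `(i, j)`. -/
def T3set {V E : Type} (s t : E → V) (v1 vi vj : V) : Set (Set V) :=
  Tset s t (S3set s t v1 vi vj)

namespace L51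

variable {V E : Type}

/-- Edges with one endpoint in `X` and the other in `Y`. -/
def cross (s t : E → V) (X Y : Set V) : Set E :=
  {e | (s e ∈ X ∧ t e ∈ Y) ∨ (s e ∈ Y ∧ t e ∈ X)}

variable (s t : E → V)

lemma cross_comm (X Y : Set V) : cross s t X Y = cross s t Y X := by
  ext e; simp only [cross, Set.mem_setOf_eq]; tauto

lemma termPts_eq_cross (Z : Set V) : TermPts s t Z = cross s t Z Zᶜ := by
  ext e; simp only [TermPts, cross, Set.mem_setOf_eq, Set.mem_compl_iff]; tauto

lemma cross_mono {X X' Y Y' : Set V} (hX : X ⊆ X') (hY : Y ⊆ Y') :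
    cross s t X Y ⊆ cross s t X' Y' := by
  intro e he; rcases he with ⟨h1, h2⟩ | ⟨h1, h2⟩
  · exact Or.inl ⟨hX h1, hY h2⟩
  · exact Or.inr ⟨hY h1, hX h2⟩

lemma cross_union_left (X Y Z : Set V) :
    cross s t (X ∪ Y) Z = cross s t X Z ∪ cross s t Y Z := by
  ext e; simp only [cross, Set.mem_union, Set.mem_setOf_eq]; tauto

lemma cross_union_right (X Y Z : Set V) :
    cross s t X (Y ∪ Z) = cross s t X Y ∪ cross s t X Z := by
  ext e; simp only [cross, Set.mem_union, Set.mem_setOf_eq]; tauto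

lemma cross_disjoint_left {X Y X' Y' : Set V} (h1 : Disjoint X X') (h2 : Disjoint X Y') :
    Disjoint (cross s t X Y) (cross s t X' Y') := by
  rw [Set.disjoint_left]
  rintro e (⟨ha, hb⟩ | ⟨ha, hb⟩) (⟨hc, hd⟩ | ⟨hc, hd⟩)
  · exact h1.ne_of_mem ha hc rfl
  · exact h2.ne_of_mem ha hc rfl
  · exact h2.ne_of_mem hb hd rfl
  · exact h1.ne_of_mem hb hd rfl

lemma cross_disjoint_right {X Y X' Y' : Set V} (h1 : Disjoint Y Y') (h2 : Disjoint Y X') :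
    Disjoint (cross s t X Y) (cross s t X' Y') := by
  rw [cross_comm s t X Y, cross_comm s t X' Y']
  exact cross_disjoint_left s t h1 h2

lemma termPts_inter_subset (A B : Set V) :
    TermPts s t (A ∩ B) ⊆ TermPts s t A ∪ TermPts s t B := by
  intro e he
  rcases he with ⟨⟨h1, h2⟩, h3⟩ | ⟨⟨h1, h2⟩, h3⟩ <;>
  · simp only [Set.mem_inter_iff, not_and_or] at h3
    unfold TermPts; rcases h3 with h3 | h3
    · left; simp only [Set.mem_setOf_eq]; tauto
    · right; simp only [Set.mem_setOf_eq]; tauto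

lemma termPts_union_subset (A B : Set V) :
    TermPts s t (A ∪ B) ⊆ TermPts s t A ∪ TermPts s t B := by
  intro e he
  rcases he with ⟨h1, h3⟩ | ⟨h1, h3⟩ <;>
  · simp only [Set.mem_union, not_or] at h3 h1
    unfold TermPts
    rcases h1 with h1 | h1
    · left; simp only [Set.mem_setOf_eq]; tauto
    · right; simp only [Set.mem_setOf_eq]; tauto

end L51
namespace L51
variable {V E : Type} (s t : E → V)

/-- The step relation used in `ConnOn`. -/
def Stp (U : Set V) (a b : V) : Prop :=
  a ∈ U ∧ b ∈ U ∧ ∃ e, (s e = a ∧ t e = b) ∨ (s e = b ∧ t e = a)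

lemma connOn_iff (U : Set V) :
    ConnOn s t U ↔ ∀ x ∈ U, ∀ y ∈ U, Relation.ReflTransGen (Stp s t U) x y := Iff.rfl

lemma stp_symm (U : Set V) : Symmetric (Stp s t U) := by
  rintro a b ⟨h1, h2, e, he⟩
  exact ⟨h2, h1, e, he.symm⟩

lemma stp_mono {U U' : Set V} (hsub : U ⊆ U') {x y : V}
    (h : Relation.ReflTransGen (Stp s t U) x y) :
    Relation.ReflTransGen (Stp s t U') x y := by
  refine Relation.ReflTransGen.lift id ?_ _ _ h
  rintro a b ⟨h1, h2, he⟩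
  exact ⟨hsub h1, hsub h2, he⟩

lemma exists_cross_of_connOn {U X : Set V} (h : ConnOn s t U) {a b : V}
    (ha : a ∈ U) (haX : a ∈ X) (hb : b ∈ U) (hbX : b ∉ X) :
    (cross s t (U ∩ X) (U \ X)).Nonempty := by
  have hpath := (connOn_iff s t U).mp h a ha b hb
  clear ha
  revert haX
  induction hpath using Relation.ReflTransGen.head_induction_on with
  | refl => exact fun haX => absurd haX hbX
  | head hstep hrest ih =>
      rename_i u c
      intro haX
      obtain ⟨hxU, hcU, e, he⟩ := hstep
      by_cases hcX : c ∈ X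
      · exact ih hcX
      · refine ⟨e, ?_⟩
        rcases he with ⟨h1, h2⟩ | ⟨h1, h2⟩
        · exact Or.inl ⟨by rw [h1]; exact ⟨hxU, haX⟩, by rw [h2]; exact ⟨hcU, hcX⟩⟩
        · exact Or.inr ⟨by rw [h1]; exact ⟨hcU, hcX⟩, by rw [h2]; exact ⟨hxU, haX⟩⟩

lemma cross_nonempty_of_connOn {P Q : Set V} (h : ConnOn s t (P ∪ Q)) (hd : Disjoint P Q)
    (hP : P.Nonempty) (hQ : Q.Nonempty) : (cross s t P Q).Nonempty := by
  obtain ⟨p, hp⟩ := hP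
  obtain ⟨q, hq⟩ := hQ
  have hqP : q ∉ P := fun hqP => hd.ne_of_mem hqP hq rfl
  have := exists_cross_of_connOn s t h (Or.inl hp) hp (Or.inr hq) hqP
  have h1 : (P ∪ Q) ∩ P = P := Set.inter_eq_self_of_subset_right Set.subset_union_left
  have h2 : (P ∪ Q) \ P = Q := by
    ext v
    simp only [Set.mem_diff, Set.mem_union]
    constructor
    · rintro ⟨hv | hv, hvP⟩
      · exact absurd hv hvP
      · exact hv
    · intro hv
      exact ⟨Or.inr hv, fun hvP => hd.ne_of_mem hvP hv rfl⟩
  rwa [h1, h2] at this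

lemma connOn_of_attach {P Q : Set V} (h : ConnOn s t (P ∪ Q)) (hd : Disjoint P Q) (p0 : V)
    (hp0 : ∀ e ∈ cross s t P Q, (s e ∈ P → s e = p0) ∧ (t e ∈ P → t e = p0)) :
    ConnOn s t P := by
  classical
  intro x hx y hy
  have hpath := (connOn_iff s t _).mp h x (Or.inl hx) y (Or.inl hy)
  set φ : V → V := fun v => if v ∈ P then v else p0 with hφ
  have step : ∀ a b, Stp s t (P ∪ Q) a b →
      Relation.ReflTransGen (Stp s t P) (φ a) (φ b) := by
    rintro a b ⟨haU, hbU, e, he⟩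
    have hQmem : ∀ v, v ∈ P ∪ Q → v ∉ P → v ∈ Q := by
      rintro v (hv | hv) hvP
      · exact absurd hv hvP
      · exact hv
    by_cases haP : a ∈ P <;> by_cases hbP : b ∈ P
    · have : φ a = a := if_pos haP
      have hb' : φ b = b := if_pos hbP
      rw [this, hb']
      exact Relation.ReflTransGen.single ⟨haP, hbP, e, he⟩
    · -- a ∈ P, b ∈ Q
      have hbQ : b ∈ Q := hQmem b hbU hbP
      have hcross : e ∈ cross s t P Q := by
        rcases he with ⟨h1, h2⟩ | ⟨h1, h2⟩
        · exact Or.inl ⟨h1 ▸ haP, h2 ▸ hbQ⟩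
        · exact Or.inr ⟨h1 ▸ hbQ, h2 ▸ haP⟩
      have ha0 : a = p0 := by
        rcases he with ⟨h1, h2⟩ | ⟨h1, h2⟩
        · exact h1 ▸ (hp0 e hcross).1 (h1 ▸ haP)
        · exact h2 ▸ (hp0 e hcross).2 (h2 ▸ haP)
      have : φ a = p0 := by rw [hφ]; simp only [if_pos haP]; exact ha0
      have hb' : φ b = p0 := if_neg hbP
      rw [this, hb']
    · -- a ∈ Q, b ∈ P
      have haQ : a ∈ Q := hQmem a haU haP
      have hcross : e ∈ cross s t P Q := by
        rcases he with ⟨h1, h2⟩ | ⟨h1, h2⟩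
        · exact Or.inr ⟨h1 ▸ haQ, h2 ▸ hbP⟩
        · exact Or.inl ⟨h1 ▸ hbP, h2 ▸ haQ⟩
      have hb0 : b = p0 := by
        rcases he with ⟨h1, h2⟩ | ⟨h1, h2⟩
        · exact h2 ▸ (hp0 e hcross).2 (h2 ▸ hbP)
        · exact h1 ▸ (hp0 e hcross).1 (h1 ▸ hbP)
      have ha' : φ a = p0 := if_neg haP
      have : φ b = p0 := by rw [hφ]; simp only [if_pos hbP]; exact hb0
      rw [ha', this]
    · have ha' : φ a = p0 := if_neg haP
      have hb' : φ b = p0 := if_neg hbP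
      rw [ha', hb']
  have main : Relation.ReflTransGen (Stp s t P) (φ x) (φ y) :=
    Relation.ReflTransGen.lift' φ step _ _ hpath
  have hx' : φ x = x := if_pos hx
  have hy' : φ y = y := if_pos hy
  rwa [hx', hy'] at main

lemma connOn_pair {P Q : Set V} (h : ConnOn s t (P ∪ Q)) (hd : Disjoint P Q) {f : E}
    (hf : cross s t P Q = {f}) : ConnOn s t P := by
  classical
  have hfc : f ∈ cross s t P Q := by rw [hf]; rfl
  set p0 : V := if s f ∈ P then s f else t f with hp0def
  apply connOn_of_attach s t h hd p0
  intro e he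
  rw [hf, Set.mem_singleton_iff] at he
  subst he
  constructor
  · intro hs
    rw [hp0def, if_pos hs]
  · intro ht
    have hsf : s e ∉ P := by
      intro hs
      rcases hfc with ⟨h1, h2⟩ | ⟨h1, h2⟩
      · exact hd.ne_of_mem ht h2 rfl
      · exact hd.ne_of_mem hs h1 rfl
    rw [hp0def, if_neg hsf]

lemma connOn_pair' {P Q : Set V} (h : ConnOn s t (P ∪ Q)) (hd : Disjoint P Q) {f : E}
    (hf : cross s t P Q = {f}) : ConnOn s t Q := by
  rw [Set.union_comm] at h
  rw [cross_comm] at hf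
  exact connOn_pair s t h hd.symm hf

lemma connOn_union_mem {X Y : Set V} (hX : ConnOn s t X) (hY : ConnOn s t Y) {v : V}
    (hvX : v ∈ X) (hvY : v ∈ Y) : ConnOn s t (X ∪ Y) := by
  have reach : ∀ u ∈ X ∪ Y, Relation.ReflTransGen (Stp s t (X ∪ Y)) u v := by
    rintro u (hu | hu)
    · exact stp_mono s t Set.subset_union_left (hX u hu v hvX)
    · exact stp_mono s t Set.subset_union_right (hY u hu v hvY)
  intro x hx y hy
  exact (reach x hx).trans (haveI : Std.Symm (Stp s t (X ∪ Y)) := ⟨stp_symm s t _⟩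
    Std.Symm.symm _ _ (reach y hy))

lemma connOn_union_edge {X Y : Set V} (hX : ConnOn s t X) (hY : ConnOn s t Y) {e : E}
    (he : e ∈ cross s t X Y) : ConnOn s t (X ∪ Y) := by
  obtain ⟨a, b, haX, hbY, hab⟩ :
      ∃ a b, a ∈ X ∧ b ∈ Y ∧ ((s e = a ∧ t e = b) ∨ (s e = b ∧ t e = a)) := by
    rcases he with ⟨h1, h2⟩ | ⟨h1, h2⟩
    · exact ⟨s e, t e, h1, h2, Or.inl ⟨rfl, rfl⟩⟩
    · exact ⟨t e, s e, h2, h1, Or.inr ⟨rfl, rfl⟩⟩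
  have hstep : Relation.ReflTransGen (Stp s t (X ∪ Y)) a b :=
    Relation.ReflTransGen.single ⟨Or.inl haX, Or.inr hbY, e, hab⟩
  have reach : ∀ u ∈ X ∪ Y, Relation.ReflTransGen (Stp s t (X ∪ Y)) u b := by
    rintro u (hu | hu)
    · exact (stp_mono s t Set.subset_union_left (hX u hu a haX)).trans hstep
    · exact stp_mono s t Set.subset_union_right (hY u hu b hbY)
  intro x hx y hy
  exact (reach x hx).trans (haveI : Std.Symm (Stp s t (X ∪ Y)) := ⟨stp_symm s t _⟩
    Std.Symm.symm _ _ (reach y hy))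

end L51
namespace L51
variable {V E : Type} (s t : E → V)

section regions
variable (A B : Set V)

lemma d_PQ : Disjoint (A ∩ B) (A \ B) := by
  rw [Set.disjoint_left]; rintro v ⟨_, hvB⟩ ⟨_, hvB'⟩; exact hvB' hvB

lemma d_PR : Disjoint (A ∩ B) (B \ A) := by
  rw [Set.disjoint_left]; rintro v ⟨hvA, _⟩ ⟨_, hvA'⟩; exact hvA' hvA

lemma d_PS : Disjoint (A ∩ B) ((A ∪ B)ᶜ) := by
  rw [Set.disjoint_left]; rintro v ⟨hvA, _⟩ hv; exact hv (Or.inl hvA)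

lemma d_QR : Disjoint (A \ B) (B \ A) := by
  rw [Set.disjoint_left]; rintro v ⟨hvA, _⟩ ⟨_, hvA'⟩; exact hvA' hvA

lemma d_QS : Disjoint (A \ B) ((A ∪ B)ᶜ) := by
  rw [Set.disjoint_left]; rintro v ⟨hvA, _⟩ hv; exact hv (Or.inl hvA)

lemma d_RS : Disjoint (B \ A) ((A ∪ B)ᶜ) := by
  rw [Set.disjoint_left]; rintro v ⟨hvB, _⟩ hv; exact hv (Or.inr hvB)


lemma eq_A : A = (A ∩ B) ∪ (A \ B) := (Set.inter_union_diff A B).symm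

lemma eq_B : B = (A ∩ B) ∪ (B \ A) := by
  ext v
  simp only [Set.mem_union, Set.mem_inter_iff, Set.mem_diff]
  tauto

lemma eq_Ac : Aᶜ = (B \ A) ∪ (A ∪ B)ᶜ := by
  ext v
  simp only [Set.mem_union, Set.mem_compl_iff, Set.mem_diff, Set.mem_union]
  tauto

lemma eq_Bc : Bᶜ = (A \ B) ∪ (A ∪ B)ᶜ := by
  ext v
  simp only [Set.mem_union, Set.mem_compl_iff, Set.mem_diff, Set.mem_union]
  tauto

lemma eq_Pc : (A ∩ B)ᶜ = ((A \ B) ∪ (B \ A)) ∪ (A ∪ B)ᶜ := by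
  ext v
  simp only [Set.mem_union, Set.mem_compl_iff, Set.mem_diff, Set.mem_union,
    Set.mem_inter_iff]
  tauto

lemma eq_U : A ∪ B = ((A ∩ B) ∪ (A \ B)) ∪ (B \ A) := by
  ext v
  simp only [Set.mem_union, Set.mem_compl_iff, Set.mem_diff, Set.mem_inter_iff]
  tauto

lemma termA_decomp : TermPts s t A =
    (cross s t (A ∩ B) (B \ A) ∪ cross s t (A ∩ B) ((A ∪ B)ᶜ)) ∪
      (cross s t (A \ B) (B \ A) ∪ cross s t (A \ B) ((A ∪ B)ᶜ)) := by
  rw [termPts_eq_cross,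
    show cross s t A Aᶜ
        = cross s t ((A ∩ B) ∪ (A \ B)) ((B \ A) ∪ (A ∪ B)ᶜ) from by
      rw [← eq_A, ← eq_Ac],
    cross_union_left, cross_union_right, cross_union_right]

lemma termB_decomp : TermPts s t B =
    (cross s t (A ∩ B) (A \ B) ∪ cross s t (A ∩ B) ((A ∪ B)ᶜ)) ∪
      (cross s t (B \ A) (A \ B) ∪ cross s t (B \ A) ((A ∪ B)ᶜ)) := by
  rw [termPts_eq_cross,
    show cross s t B Bᶜ
        = cross s t ((A ∩ B) ∪ (B \ A)) ((A \ B) ∪ (A ∪ B)ᶜ) from by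
      rw [← eq_B, ← eq_Bc],
    cross_union_left, cross_union_right, cross_union_right]

lemma termP_decomp : TermPts s t (A ∩ B) =
    (cross s t (A ∩ B) (A \ B) ∪ cross s t (A ∩ B) (B \ A)) ∪
      cross s t (A ∩ B) ((A ∪ B)ᶜ) := by
  rw [termPts_eq_cross,
    show cross s t (A ∩ B) (A ∩ B)ᶜ
        = cross s t (A ∩ B) (((A \ B) ∪ (B \ A)) ∪ (A ∪ B)ᶜ) from by
      rw [← eq_Pc],
    cross_union_right, cross_union_right]

lemma termU_decomp : TermPts s t (A ∪ B) =
    (cross s t (A ∩ B) ((A ∪ B)ᶜ) ∪ cross s t (A \ B) ((A ∪ B)ᶜ)) ∪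
      cross s t (B \ A) ((A ∪ B)ᶜ) := by
  rw [termPts_eq_cross,
    show cross s t (A ∪ B) (A ∪ B)ᶜ
        = cross s t (((A ∩ B) ∪ (A \ B)) ∪ (B \ A)) ((A ∪ B)ᶜ) from by
      rw [← eq_U],
    cross_union_left, cross_union_left]

variable [Fintype E]

lemma kcutA_eq : kcut s t A =
    (cross s t (A ∩ B) (B \ A)).ncard + (cross s t (A ∩ B) ((A ∪ B)ᶜ)).ncard +
      ((cross s t (A \ B) (B \ A)).ncard + (cross s t (A \ B) ((A ∪ B)ᶜ)).ncard) := by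
  rw [kcut, termA_decomp s t A B]
  rw [Set.ncard_union_eq ?d1 (Set.toFinite _) (Set.toFinite _),
    Set.ncard_union_eq ?d2 (Set.toFinite _) (Set.toFinite _),
    Set.ncard_union_eq ?d3 (Set.toFinite _) (Set.toFinite _)]
  case d2 => exact cross_disjoint_right s t (d_RS A B) ((d_PR A B).symm)
  case d3 => exact cross_disjoint_right s t (d_RS A B) ((d_QR A B).symm)
  case d1 =>
    apply Disjoint.union_left <;> apply Disjoint.union_right <;>
      exact cross_disjoint_left s t (d_PQ A B) (by first
        | exact d_PR A B
        | exact d_PS A B)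

lemma kcutB_eq : kcut s t B =
    (cross s t (A ∩ B) (A \ B)).ncard + (cross s t (A ∩ B) ((A ∪ B)ᶜ)).ncard +
      ((cross s t (B \ A) (A \ B)).ncard + (cross s t (B \ A) ((A ∪ B)ᶜ)).ncard) := by
  rw [kcut, termB_decomp s t A B]
  rw [Set.ncard_union_eq ?d1 (Set.toFinite _) (Set.toFinite _),
    Set.ncard_union_eq ?d2 (Set.toFinite _) (Set.toFinite _),
    Set.ncard_union_eq ?d3 (Set.toFinite _) (Set.toFinite _)]
  case d2 => exact cross_disjoint_right s t (d_QS A B) ((d_PQ A B).symm)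
  case d3 => exact cross_disjoint_right s t (d_QS A B) ((d_QR A B))
  case d1 =>
    apply Disjoint.union_left <;> apply Disjoint.union_right <;>
      exact cross_disjoint_left s t (d_PR A B) (by first
        | exact d_PQ A B
        | exact d_PS A B)

lemma kcutP_eq : kcut s t (A ∩ B) =
    (cross s t (A ∩ B) (A \ B)).ncard + (cross s t (A ∩ B) (B \ A)).ncard +
      (cross s t (A ∩ B) ((A ∪ B)ᶜ)).ncard := by
  rw [kcut, termP_decomp s t A B]
  rw [Set.ncard_union_eq ?d1 (Set.toFinite _) (Set.toFinite _),
    Set.ncard_union_eq ?d2 (Set.toFinite _) (Set.toFinite _)]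
  case d2 => exact cross_disjoint_right s t (d_QR A B) ((d_PQ A B).symm)
  case d1 =>
    apply Disjoint.union_left
    · exact cross_disjoint_right s t (d_QS A B) ((d_PQ A B).symm)
    · exact cross_disjoint_right s t (d_RS A B) ((d_PR A B).symm)

lemma kcutU_eq : kcut s t (A ∪ B) =
    (cross s t (A ∩ B) ((A ∪ B)ᶜ)).ncard + (cross s t (A \ B) ((A ∪ B)ᶜ)).ncard +
      (cross s t (B \ A) ((A ∪ B)ᶜ)).ncard := by
  rw [kcut, termU_decomp s t A B]
  rw [Set.ncard_union_eq ?d1 (Set.toFinite _) (Set.toFinite _),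
    Set.ncard_union_eq ?d2 (Set.toFinite _) (Set.toFinite _)]
  case d2 => exact cross_disjoint_left s t (d_PQ A B) (d_PS A B)
  case d1 =>
    apply Disjoint.union_left
    · exact cross_disjoint_left s t (d_PR A B) (d_PS A B)
    · exact cross_disjoint_left s t (d_QR A B) (d_QS A B)

end regions
end L51
namespace L51
variable {V E : Type} (s t : E → V)

lemma eq_PcA (A B : Set V) : (A ∩ B)ᶜ = (A \ B) ∪ Aᶜ := by
  ext v
  simp only [Set.mem_union, Set.mem_compl_iff, Set.mem_diff, Set.mem_inter_iff]
  tauto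

lemma eq_PcB (A B : Set V) : (A ∩ B)ᶜ = (B \ A) ∪ Bᶜ := by
  ext v
  simp only [Set.mem_union, Set.mem_compl_iff, Set.mem_diff, Set.mem_inter_iff]
  tauto

lemma S_sub_Ac (A B : Set V) : (A ∪ B)ᶜ ⊆ Aᶜ := by
  intro v hv
  exact fun hvA => hv (Or.inl hvA)

lemma S_sub_Bc (A B : Set V) : (A ∪ B)ᶜ ⊆ Bᶜ := by
  intro v hv
  exact fun hvB => hv (Or.inr hvB)

lemma cross_subset_term {X Y Z : Set V} (hX : X ⊆ Z) (hY : Y ⊆ Zᶜ) :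
    cross s t X Y ⊆ TermPts s t Z := by
  rw [termPts_eq_cross]
  exact cross_mono s t hX hY

section conn
variable {A B : Set V}

lemma connP_via_A (hA : ConnOn s t A) {f : E}
    (ha : cross s t (A ∩ B) (A \ B) = {f}) :
    ConnOn s t (A ∩ B) ∧ ConnOn s t (A \ B) := by
  have hA' : ConnOn s t ((A ∩ B) ∪ (A \ B)) := by rw [← eq_A]; exact hA
  exact ⟨connOn_pair s t hA' (d_PQ A B) ha, connOn_pair' s t hA' (d_PQ A B) ha⟩

lemma connP_via_B (hB : ConnOn s t B) {f : E}
    (hb : cross s t (A ∩ B) (B \ A) = {f}) :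
    ConnOn s t (A ∩ B) ∧ ConnOn s t (B \ A) := by
  have hB' : ConnOn s t ((A ∩ B) ∪ (B \ A)) := by rw [← eq_B]; exact hB
  exact ⟨connOn_pair s t hB' (d_PR A B) hb, connOn_pair' s t hB' (d_PR A B) hb⟩

lemma connS_via_Ac (hAc : ConnOn s t Aᶜ) {f : E}
    (hd : cross s t (B \ A) ((A ∪ B)ᶜ) = {f}) :
    ConnOn s t (B \ A) ∧ ConnOn s t ((A ∪ B)ᶜ) := by
  have hAc' : ConnOn s t ((B \ A) ∪ (A ∪ B)ᶜ) := by rw [← eq_Ac]; exact hAc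
  exact ⟨connOn_pair s t hAc' (d_RS A B) hd, connOn_pair' s t hAc' (d_RS A B) hd⟩

lemma connPc_via_Q (hAc : ConnOn s t Aᶜ) (hQconn : ConnOn s t (A \ B))
    (hQS : (cross s t (A \ B) ((A ∪ B)ᶜ)).Nonempty) :
    ConnOn s t ((A ∩ B)ᶜ) := by
  obtain ⟨e, he⟩ := hQS
  have he' : e ∈ cross s t (A \ B) Aᶜ :=
    cross_mono s t (le_refl _) (S_sub_Ac A B) he
  rw [eq_PcA]
  exact connOn_union_edge s t hQconn hAc he'

lemma connPc_via_R (hBc : ConnOn s t Bᶜ) (hRconn : ConnOn s t (B \ A))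
    (hRS : (cross s t (B \ A) ((A ∪ B)ᶜ)).Nonempty) :
    ConnOn s t ((A ∩ B)ᶜ) := by
  obtain ⟨e, he⟩ := hRS
  have he' : e ∈ cross s t (B \ A) Bᶜ :=
    cross_mono s t (le_refl _) (S_sub_Bc A B) he
  rw [eq_PcB]
  exact connOn_union_edge s t hRconn hBc he'

lemma crossing_ge_one [Fintype E]
    (hA : ConnOn s t A) (hAc : ConnOn s t Aᶜ) (hB : ConnOn s t B) (hBc : ConnOn s t Bᶜ)
    (hP : (A ∩ B).Nonempty) (hQ : (A \ B).Nonempty)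
    (hR : (B \ A).Nonempty) (hS : ((A ∪ B)ᶜ).Nonempty) :
    0 < (cross s t (A ∩ B) (A \ B)).ncard ∧ 0 < (cross s t (A ∩ B) (B \ A)).ncard ∧
      0 < (cross s t (A \ B) ((A ∪ B)ᶜ)).ncard ∧
        0 < (cross s t (B \ A) ((A ∪ B)ᶜ)).ncard := by
  have hA' : ConnOn s t ((A ∩ B) ∪ (A \ B)) := by rw [← eq_A]; exact hA
  have hB' : ConnOn s t ((A ∩ B) ∪ (B \ A)) := by rw [← eq_B]; exact hB
  have hAc' : ConnOn s t ((B \ A) ∪ (A ∪ B)ᶜ) := by rw [← eq_Ac]; exact hAc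
  have hBc' : ConnOn s t ((A \ B) ∪ (A ∪ B)ᶜ) := by rw [← eq_Bc]; exact hBc
  refine ⟨?_, ?_, ?_, ?_⟩ <;>
    exact (Set.ncard_pos (Set.toFinite _)).mpr
      (by first
        | exact cross_nonempty_of_connOn s t hA' (d_PQ A B) hP hQ
        | exact cross_nonempty_of_connOn s t hB' (d_PR A B) hP hR
        | exact cross_nonempty_of_connOn s t hBc' (d_QS A B) hQ hS
        | exact cross_nonempty_of_connOn s t hAc' (d_RS A B) hR hS)

end conn

lemma freePair_symm {X Y : Set V} (h : FreePair s t X Y) : FreePair s t Y X := by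
  unfold FreePair at *
  rw [Set.inter_comm]
  exact h

lemma sInter_mem_of_inter_closed [Fintype V] {F C : Set (Set V)}
    (hC : ∀ a ∈ C, ∀ b ∈ C, a ∩ b ∈ C) (hFC : F ⊆ C) (hne : F.Nonempty) :
    ⋂₀ F ∈ C := by
  classical
  have key : ∀ G : Set (Set V), G.Finite → G ⊆ C → G.Nonempty → ⋂₀ G ∈ C := by
    intro G hG
    refine Set.Finite.induction_on (motive := fun G _ => G ⊆ C → G.Nonempty → ⋂₀ G ∈ C) G hG (fun _ h => absurd h (by simp)) ?_
    intro a G' ha hG' ih hsub hne'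
    rw [Set.sInter_insert]
    have haC : a ∈ C := hsub (Set.mem_insert a G')
    rcases G'.eq_empty_or_nonempty with hGe | hGne
    · rw [hGe]
      simpa using haC
    · have hG'C : G' ⊆ C := fun x hx => hsub (Set.mem_insert_of_mem a hx)
      exact hC a haC _ (ih hG'C hGne)
  exact key F (Set.toFinite F) hFC hne

lemma sInter_mem_self_of_closed [Fintype V] {F : Set (Set V)}
    (hclosed : ∀ a ∈ F, ∀ b ∈ F, a ∩ b ∈ F) (hne : F.Nonempty) : ⋂₀ F ∈ F :=
  sInter_mem_of_inter_closed hclosed (le_refl _) hne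

end L51
namespace L51
variable {V E : Type} [Fintype V] [Fintype E] (s t : E → V) (v1 vi vj : V)

lemma freePair_inter {W A B : Set V} (h1 : FreePair s t W A) (h2 : FreePair s t W B) :
    FreePair s t W (A ∩ B) := by
  unfold FreePair at *
  rw [Set.eq_empty_iff_forall_notMem]
  rintro e ⟨heW, heP⟩
  rcases termPts_inter_subset s t A B heP with h | h
  · exact Set.eq_empty_iff_forall_notMem.mp h1 e ⟨heW, h⟩
  · exact Set.eq_empty_iff_forall_notMem.mp h2 e ⟨heW, h⟩

lemma term_nonempty_of_kcut_pos {Y : Set V} (h : 0 < kcut s t Y) :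
    (TermPts s t Y).Nonempty :=
  (Set.ncard_pos (Set.toFinite _)).mp h

lemma s2_crossing {A B : Set V}
    (hA : A ∈ S2set s t v1 vi vj) (hB : B ∈ S2set s t v1 vi vj)
    (hAB : ¬ A ⊆ B) (hBA : ¬ B ⊆ A) :
    A ∩ B ∈ S2set s t v1 vi vj ∧
      (TermPts s t (A ∩ B) ∩ TermPts s t A).Nonempty ∧
      (TermPts s t (A ∩ B) ∩ TermPts s t B).Nonempty := by
  obtain ⟨⟨hsubA, hconnA, hconnAc⟩, hkA, hviA, hvjA, hv1A⟩ := hA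
  obtain ⟨⟨hsubB, hconnB, hconnBc⟩, hkB, hviB, hvjB, hv1B⟩ := hB
  have hP : (A ∩ B).Nonempty := ⟨vi, hviA, hviB⟩
  have hQ : (A \ B).Nonempty := by
    rw [Set.not_subset] at hAB
    obtain ⟨x, h1, h2⟩ := hAB
    exact ⟨x, h1, h2⟩
  have hR : (B \ A).Nonempty := by
    rw [Set.not_subset] at hBA
    obtain ⟨x, h1, h2⟩ := hBA
    exact ⟨x, h1, h2⟩
  have hS : ((A ∪ B)ᶜ).Nonempty := ⟨v1, fun h => h.elim hv1A hv1B⟩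
  obtain ⟨ha, hb, hc, hd⟩ :=
    crossing_ge_one s t hconnA hconnAc hconnB hconnBc hP hQ hR hS
  have eA := kcutA_eq s t A B
  have eB := kcutB_eq s t A B
  rw [hkA] at eA
  rw [hkB] at eB
  rw [show (cross s t (B \ A) (A \ B)).ncard = (cross s t (A \ B) (B \ A)).ncard from by
    rw [cross_comm]] at eB
  have ha1 : (cross s t (A ∩ B) (A \ B)).ncard = 1 := by omega
  have hb1 : (cross s t (A ∩ B) (B \ A)).ncard = 1 := by omega
  have hx0 : (cross s t (A ∩ B) ((A ∪ B)ᶜ)).ncard = 0 := by omega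
  have hc1 : (cross s t (A \ B) ((A ∪ B)ᶜ)).ncard = 1 := by omega
  obtain ⟨f, hf⟩ := Set.ncard_eq_one.mp ha1
  obtain ⟨hPconn, hQconn⟩ := connP_via_A s t hconnA hf
  have hQSne : (cross s t (A \ B) ((A ∪ B)ᶜ)).Nonempty :=
    (Set.ncard_pos (Set.toFinite _)).mp (by omega)
  have hPcconn := connPc_via_Q s t hconnAc hQconn hQSne
  have hv1P : v1 ∉ A ∩ B := fun h => hv1A h.1
  have hPtail : IsTail s t (A ∩ B) :=
    ⟨⟨hP, fun h => hv1P (h.symm ▸ Set.mem_univ v1)⟩, hPconn, hPcconn⟩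
  have hkP : kcut s t (A ∩ B) = 2 := by
    rw [kcutP_eq s t A B, ha1, hb1, hx0]
  have hRsubPc : B \ A ⊆ (A ∩ B)ᶜ := fun v hv h => hv.2 h.1
  have hQsubPc : A \ B ⊆ (A ∩ B)ᶜ := fun v hv h => hv.2 h.2
  have hQsubBc : A \ B ⊆ Bᶜ := fun v hv => hv.2
  have hRsubAc : B \ A ⊆ Aᶜ := fun v hv => hv.2
  have hfmem : f ∈ cross s t (A ∩ B) (A \ B) := by rw [hf]; rfl
  refine ⟨⟨hPtail, hkP, ⟨hviA, hviB⟩, ⟨hvjA, hvjB⟩, hv1P⟩, ?_, ?_⟩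
  · obtain ⟨g, hg⟩ := (Set.ncard_pos (Set.toFinite _)).mp
      (show 0 < (cross s t (A ∩ B) (B \ A)).ncard by omega)
    exact ⟨g, cross_subset_term s t (le_refl _) hRsubPc hg,
      cross_subset_term s t Set.inter_subset_left hRsubAc hg⟩
  · exact ⟨f, cross_subset_term s t (le_refl _) hQsubPc hfmem,
      cross_subset_term s t Set.inter_subset_right hQsubBc hfmem⟩

lemma s2_inter_closed :
    ∀ A ∈ S2set s t v1 vi vj, ∀ B ∈ S2set s t v1 vi vj,
      A ∩ B ∈ S2set s t v1 vi vj := by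
  intro A hA B hB
  by_cases hAB : A ⊆ B
  · rw [Set.inter_eq_left.mpr hAB]
    exact hA
  by_cases hBA : B ⊆ A
  · rw [Set.inter_eq_right.mpr hBA]
    exact hB
  exact (s2_crossing s t v1 vi vj hA hB hAB hBA).1

lemma tlevel_subset (S : Set (Set V)) : ∀ m, Tlevel s t S m ⊆ S := by
  intro m
  cases m with
  | zero => exact le_refl _
  | succ m => exact fun Z hZ => hZ.1

lemma mem_tlevel_succ {S : Set (Set V)} {m : ℕ} {Z : Set V} :
    Z ∈ Tlevel s t S (m + 1) ↔
      Z ∈ S ∧ ⋂₀ Tlevel s t S m ⊂ Z ∧ FreePair s t (⋂₀ Tlevel s t S m) Z :=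
  Iff.rfl

lemma t2level_closed :
    ∀ m, ∀ A ∈ Tlevel s t (S2set s t v1 vi vj) m, ∀ B ∈ Tlevel s t (S2set s t v1 vi vj) m,
      A ∩ B ∈ Tlevel s t (S2set s t v1 vi vj) m := by
  intro m
  cases m with
  | zero => exact s2_inter_closed s t v1 vi vj
  | succ m =>
      intro A hA B hB
      rw [mem_tlevel_succ] at hA hB ⊢
      obtain ⟨hAS, hAW, hAF⟩ := hA
      obtain ⟨hBS, hBW, hBF⟩ := hB
      refine ⟨s2_inter_closed s t v1 vi vj A hAS B hBS, ?_,
        freePair_inter s t hAF hBF⟩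
      rw [Set.ssubset_iff_subset_ne]
      refine ⟨Set.subset_inter hAW.subset hBW.subset, ?_⟩
      intro heq
      have hAB : ¬ A ⊆ B := by
        intro hss
        rw [Set.inter_eq_left.mpr hss] at heq
        exact hAW.ne heq
      have hBA : ¬ B ⊆ A := by
        intro hss
        rw [Set.inter_eq_right.mpr hss] at heq
        exact hBW.ne heq
      obtain ⟨g, hg1, hg2⟩ := (s2_crossing s t v1 vi vj hAS hBS hAB hBA).2.2
      rw [← heq] at hg1
      exact Set.eq_empty_iff_forall_notMem.mp hBF g ⟨hg1, hg2⟩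

lemma t2_W_mem_S2 {m : ℕ} (hne : (Tlevel s t (S2set s t v1 vi vj) m).Nonempty) :
    ⋂₀ Tlevel s t (S2set s t v1 vi vj) m ∈ S2set s t v1 vi vj :=
  sInter_mem_of_inter_closed (s2_inter_closed s t v1 vi vj)
    (tlevel_subset s t _ m) hne

lemma t2_W_mem_level {m : ℕ} (hne : (Tlevel s t (S2set s t v1 vi vj) m).Nonempty) :
    ⋂₀ Tlevel s t (S2set s t v1 vi vj) m ∈ Tlevel s t (S2set s t v1 vi vj) m :=
  sInter_mem_self_of_closed (t2level_closed s t v1 vi vj m) hne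

lemma t2level_down {m : ℕ} (hne : (Tlevel s t (S2set s t v1 vi vj) m.succ).Nonempty) :
    (Tlevel s t (S2set s t v1 vi vj) m).Nonempty := by
  obtain ⟨A, hA⟩ := hne
  rw [mem_tlevel_succ] at hA
  by_contra h
  rw [Set.not_nonempty_iff_eq_empty] at h
  rw [h, Set.sInter_empty] at hA
  have := Set.eq_univ_of_univ_subset hA.2.1.subset
  exact hA.2.1.ne this.symm

lemma t2_W_step {m : ℕ} (hne : (Tlevel s t (S2set s t v1 vi vj) m.succ).Nonempty) :
    ⋂₀ Tlevel s t (S2set s t v1 vi vj) m ⊂ ⋂₀ Tlevel s t (S2set s t v1 vi vj) m.succ ∧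
      FreePair s t (⋂₀ Tlevel s t (S2set s t v1 vi vj) m)
        (⋂₀ Tlevel s t (S2set s t v1 vi vj) m.succ) := by
  have h := t2_W_mem_level s t v1 vi vj hne
  rw [mem_tlevel_succ] at h
  exact ⟨h.2.1, h.2.2⟩

lemma t2_W_chain {l m : ℕ} (hlm : l ≤ m)
    (hne : (Tlevel s t (S2set s t v1 vi vj) m).Nonempty) :
    ⋂₀ Tlevel s t (S2set s t v1 vi vj) l ⊆ ⋂₀ Tlevel s t (S2set s t v1 vi vj) m := by
  induction m with
  | zero =>
      have : l = 0 := Nat.le_zero.mp hlm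
      rw [this]
  | succ m ih =>
      rcases Nat.lt_or_ge l (m + 1) with h | h
      · exact (ih (Nat.lt_succ_iff.mp h) (t2level_down s t v1 vi vj hne)).trans
          (t2_W_step s t v1 vi vj hne).1.subset
      · rw [Nat.le_antisymm hlm h]

lemma t2_free_of_level {l m : ℕ} (hlt : l < m) {A : Set V}
    (hA : A ∈ Tlevel s t (S2set s t v1 vi vj) m) :
    TermPts s t (⋂₀ Tlevel s t (S2set s t v1 vi vj) l) ∩ TermPts s t A = ∅ := by
  obtain ⟨k, rfl⟩ : ∃ k, m = k + 1 := ⟨m - 1, by omega⟩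
  rw [mem_tlevel_succ] at hA
  obtain ⟨hAS, hss, hfree⟩ := hA
  have hklne : (Tlevel s t (S2set s t v1 vi vj) k).Nonempty := by
    by_contra h
    rw [Set.not_nonempty_iff_eq_empty] at h
    rw [h, Set.sInter_empty] at hss
    exact hss.ne (Set.eq_univ_of_univ_subset hss.subset).symm
  have hWlk : ⋂₀ Tlevel s t (S2set s t v1 vi vj) l ⊆
      ⋂₀ Tlevel s t (S2set s t v1 vi vj) k :=
    t2_W_chain s t v1 vi vj (by omega) hklne
  rw [Set.eq_empty_iff_forall_notMem]
  rintro e ⟨heL, heA⟩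
  have hboth : s e ∈ A ∧ t e ∈ A := by
    have hWk := Set.eq_empty_iff_forall_notMem.mp hfree e
    rcases heL with ⟨h1, h2⟩ | ⟨h1, h2⟩
    · have hsk : s e ∈ ⋂₀ Tlevel s t (S2set s t v1 vi vj) k := hWlk h1
      have htk : t e ∈ ⋂₀ Tlevel s t (S2set s t v1 vi vj) k := by
        by_contra htk
        exact hWk ⟨Or.inl ⟨hsk, htk⟩, heA⟩
      exact ⟨hss.subset hsk, hss.subset htk⟩
    · have htk : t e ∈ ⋂₀ Tlevel s t (S2set s t v1 vi vj) k := hWlk h1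
      have hsk : s e ∈ ⋂₀ Tlevel s t (S2set s t v1 vi vj) k := by
        by_contra hsk
        exact hWk ⟨Or.inr ⟨htk, hsk⟩, heA⟩
      exact ⟨hss.subset hsk, hss.subset htk⟩
  rcases heA with ⟨h1, h2⟩ | ⟨h1, h2⟩
  · exact h2 hboth.2
  · exact h2 hboth.1

lemma t2set_pairwise_free {X Y : Set V} (hX : X ∈ T2set s t v1 vi vj)
    (hY : Y ∈ T2set s t v1 vi vj) (hne : X ≠ Y) :
    TermPts s t X ∩ TermPts s t Y = ∅ := by
  obtain ⟨l, hl, rfl⟩ := hX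
  obtain ⟨m, hm, rfl⟩ := hY
  have hlm : l ≠ m := fun h => hne (by rw [h])
  rcases Nat.lt_or_ge l m with h | h
  · exact t2_free_of_level s t v1 vi vj h (t2_W_mem_level s t v1 vi vj hm)
  · have h' : m < l := by omega
    rw [Set.inter_comm]
    exact t2_free_of_level s t v1 vi vj h' (t2_W_mem_level s t v1 vi vj hl)

lemma t2_mem_S2 {X : Set V} (hX : X ∈ T2set s t v1 vi vj) :
    X ∈ S2set s t v1 vi vj := by
  obtain ⟨m, hm, rfl⟩ := hX
  exact t2_W_mem_S2 s t v1 vi vj hm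

lemma cor42 {Y : Set V} (hY : Y ∈ S2set s t v1 vi vj) :
    ∃ X ∈ T2set s t v1 vi vj, X ⊆ Y ∧ (TermPts s t X ∩ TermPts s t Y).Nonempty := by
  by_contra hcon
  push_neg at hcon
  have key : ∀ m, (Tlevel s t (S2set s t v1 vi vj) m).Nonempty ∧
      ⋂₀ Tlevel s t (S2set s t v1 vi vj) m ⊆ Y ∧
      m ≤ (⋂₀ Tlevel s t (S2set s t v1 vi vj) m).ncard := by
    intro m
    induction m with
    | zero => exact ⟨⟨Y, hY⟩, Set.sInter_subset_of_mem hY, Nat.zero_le _⟩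
    | succ m ih =>
        obtain ⟨hne, hsub, hcard⟩ := ih
        have hWT : ⋂₀ Tlevel s t (S2set s t v1 vi vj) m ∈ T2set s t v1 vi vj :=
          ⟨m, hne, rfl⟩
        have hfree : TermPts s t (⋂₀ Tlevel s t (S2set s t v1 vi vj) m) ∩
            TermPts s t Y = ∅ := hcon _ hWT hsub
        have hssub : ⋂₀ Tlevel s t (S2set s t v1 vi vj) m ⊂ Y := by
          rw [Set.ssubset_iff_subset_ne]
          refine ⟨hsub, ?_⟩
          intro heq
          have h2 : kcut s t Y = 2 := hY.2.1
          have hTne := term_nonempty_of_kcut_pos s t (Y := Y) (by omega)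
          rw [heq, Set.inter_self] at hfree
          rw [hfree] at hTne
          exact Set.not_nonempty_empty hTne
        have hYlvl : Y ∈ Tlevel s t (S2set s t v1 vi vj) (m + 1) :=
          (mem_tlevel_succ s t).mpr ⟨hY, hssub, hfree⟩
        have hne' : (Tlevel s t (S2set s t v1 vi vj) (m + 1)).Nonempty := ⟨Y, hYlvl⟩
        have hstrict := (t2_W_step s t v1 vi vj hne').1
        have hlt : (⋂₀ Tlevel s t (S2set s t v1 vi vj) m).ncard <
            (⋂₀ Tlevel s t (S2set s t v1 vi vj) (m + 1)).ncard :=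
          Set.ncard_lt_ncard hstrict (Set.toFinite _)
        exact ⟨hne', Set.sInter_subset_of_mem hYlvl, by omega⟩
  obtain ⟨_, _, hcard⟩ := key (Fintype.card V + 1)
  have hle : (⋂₀ Tlevel s t (S2set s t v1 vi vj) (Fintype.card V + 1)).ncard ≤
      Fintype.card V := by
    have := Set.ncard_le_ncard (Set.subset_univ
      (⋂₀ Tlevel s t (S2set s t v1 vi vj) (Fintype.card V + 1))) (Set.toFinite _)
    rwa [Set.ncard_univ, Nat.card_eq_fintype_card] at this
  omega

end L51
namespace L51
variable {V E : Type} [Fintype V] [Fintype E] (s t : E → V) (v1 vi vj : V)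

lemma freePair_of_subset {Y A B X : Set V}
    (hsub : TermPts s t Y ⊆ TermPts s t A ∪ TermPts s t B)
    (h1 : FreePair s t A X) (h2 : FreePair s t B X) : FreePair s t Y X := by
  unfold FreePair at *
  rw [Set.eq_empty_iff_forall_notMem]
  rintro e ⟨heY, heX⟩
  rcases hsub heY with h | h
  · exact Set.eq_empty_iff_forall_notMem.mp h1 e ⟨h, heX⟩
  · exact Set.eq_empty_iff_forall_notMem.mp h2 e ⟨h, heX⟩

lemma s3_contra {A B Y : Set V}
    (hA : A ∈ S3set s t v1 vi vj) (hB : B ∈ S3set s t v1 vi vj)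
    (hY : Y ∈ S2set s t v1 vi vj)
    (hsubT : TermPts s t Y ⊆ TermPts s t A ∪ TermPts s t B) : False := by
  obtain ⟨X, hXT2, _, g, hg1, hg2⟩ := cor42 s t v1 vi vj hY
  rcases hsubT hg2 with h | h
  · exact Set.eq_empty_iff_forall_notMem.mp (hA.2.2.2.2.2 X hXT2) g ⟨h, hg1⟩
  · exact Set.eq_empty_iff_forall_notMem.mp (hB.2.2.2.2.2 X hXT2) g ⟨h, hg1⟩

lemma s3_inter_closed :
    ∀ A ∈ S3set s t v1 vi vj, ∀ B ∈ S3set s t v1 vi vj,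
      A ∩ B ∈ S3set s t v1 vi vj := by
  intro A hA B hB
  by_cases hAB : A ⊆ B
  · rw [Set.inter_eq_left.mpr hAB]
    exact hA
  by_cases hBA : B ⊆ A
  · rw [Set.inter_eq_right.mpr hBA]
    exact hB
  obtain ⟨⟨hsubA, hconnA, hconnAc⟩, hkA, hviA, hvjA, hv1A, hfA⟩ := hA
  obtain ⟨⟨hsubB, hconnB, hconnBc⟩, hkB, hviB, hvjB, hv1B, hfB⟩ := hB
  have hA' : A ∈ S3set s t v1 vi vj :=
    ⟨⟨hsubA, hconnA, hconnAc⟩, hkA, hviA, hvjA, hv1A, hfA⟩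
  have hB' : B ∈ S3set s t v1 vi vj :=
    ⟨⟨hsubB, hconnB, hconnBc⟩, hkB, hviB, hvjB, hv1B, hfB⟩
  have hP : (A ∩ B).Nonempty := ⟨vi, hviA, hviB⟩
  have hQ : (A \ B).Nonempty := by
    rw [Set.not_subset] at hAB
    obtain ⟨x, h1, h2⟩ := hAB
    exact ⟨x, h1, h2⟩
  have hR : (B \ A).Nonempty := by
    rw [Set.not_subset] at hBA
    obtain ⟨x, h1, h2⟩ := hBA
    exact ⟨x, h1, h2⟩
  have hS : ((A ∪ B)ᶜ).Nonempty := ⟨v1, fun h => h.elim hv1A hv1B⟩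
  obtain ⟨ha, hb, hc, hd⟩ :=
    crossing_ge_one s t hconnA hconnAc hconnB hconnBc hP hQ hR hS
  have eA := kcutA_eq s t A B
  have eB := kcutB_eq s t A B
  rw [hkA] at eA
  rw [hkB] at eB
  rw [show (cross s t (B \ A) (A \ B)).ncard = (cross s t (A \ B) (B \ A)).ncard from by
    rw [cross_comm]] at eB
  have hv1P : v1 ∉ A ∩ B := fun h => hv1A h.1
  have hQSne : (cross s t (A \ B) ((A ∪ B)ᶜ)).Nonempty :=
    (Set.ncard_pos (Set.toFinite _)).mp hc
  have hRSne : (cross s t (B \ A) ((A ∪ B)ᶜ)).Nonempty :=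
    (Set.ncard_pos (Set.toFinite _)).mp hd
  -- connectivity of P = A ∩ B and of Pᶜ, provided a = 1 or b = 1
  have hPconnOf : (cross s t (A ∩ B) (A \ B)).ncard = 1 ∨
      (cross s t (A ∩ B) (B \ A)).ncard = 1 →
      ConnOn s t (A ∩ B) ∧ ConnOn s t ((A ∩ B)ᶜ) := by
    rintro (h1 | h1)
    · obtain ⟨f, hf⟩ := Set.ncard_eq_one.mp h1
      obtain ⟨hPc, hQc⟩ := connP_via_A s t hconnA hf
      exact ⟨hPc, connPc_via_Q s t hconnAc hQc hQSne⟩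
    · obtain ⟨f, hf⟩ := Set.ncard_eq_one.mp h1
      obtain ⟨hPc, hRc⟩ := connP_via_B s t hconnB hf
      exact ⟨hPc, connPc_via_R s t hconnBc hRc hRSne⟩
  have hcase : (cross s t (A ∩ B) (A \ B)).ncard + (cross s t (A ∩ B) (B \ A)).ncard +
      (cross s t (A ∩ B) ((A ∪ B)ᶜ)).ncard = 2 ∨
      (cross s t (A ∩ B) (A \ B)).ncard + (cross s t (A ∩ B) (B \ A)).ncard +
      (cross s t (A ∩ B) ((A ∪ B)ᶜ)).ncard = 3 ∨
      ((cross s t (A ∩ B) (A \ B)).ncard = 2 ∧ (cross s t (A ∩ B) (B \ A)).ncard = 2 ∧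
        (cross s t (A ∩ B) ((A ∪ B)ᶜ)).ncard = 0 ∧
        (cross s t (A \ B) ((A ∪ B)ᶜ)).ncard = 1 ∧
        (cross s t (B \ A) ((A ∪ B)ᶜ)).ncard = 1) := by omega
  rcases hcase with hk2 | hk3 | hk4
  · -- k_P = 2 : contradiction via cor42
    exfalso
    obtain ⟨hPconn, hPcconn⟩ := hPconnOf (Or.inl (by omega))
    have hYmem : A ∩ B ∈ S2set s t v1 vi vj := by
      refine ⟨⟨⟨hP, fun h => hv1P (h.symm ▸ Set.mem_univ v1)⟩, hPconn, hPcconn⟩,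
        ?_, ⟨hviA, hviB⟩, ⟨hvjA, hvjB⟩, hv1P⟩
      rw [kcutP_eq s t A B]
      omega
    exact s3_contra s t v1 vi vj hA' hB' hYmem (termPts_inter_subset s t A B)
  · -- k_P = 3 : the intersection is a 3-tail
    obtain ⟨hPconn, hPcconn⟩ := hPconnOf (by omega)
    refine ⟨⟨⟨hP, fun h => hv1P (h.symm ▸ Set.mem_univ v1)⟩, hPconn, hPcconn⟩,
      ?_, ⟨hviA, hviB⟩, ⟨hvjA, hvjB⟩, hv1P, ?_⟩
    · rw [kcutP_eq s t A B]
      omega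
    · intro X hX
      exact freePair_of_subset s t (termPts_inter_subset s t A B)
        (hfA X hX) (hfB X hX)
  · -- k_P = 4 : contradiction via the union
    exfalso
    obtain ⟨_, _, hx0, hc1, hd1⟩ := hk4
    obtain ⟨f, hf⟩ := Set.ncard_eq_one.mp hd1
    have hSconn : ConnOn s t ((A ∪ B)ᶜ) := (connS_via_Ac s t hconnAc hf).2
    have hUconn : ConnOn s t (A ∪ B) :=
      connOn_union_mem s t hconnA hconnB hviA hviB
    have hv1U : v1 ∉ A ∪ B := fun h => h.elim hv1A hv1B
    have hYmem : A ∪ B ∈ S2set s t v1 vi vj := by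
      refine ⟨⟨⟨⟨vi, Or.inl hviA⟩, fun h => hv1U (h.symm ▸ Set.mem_univ v1)⟩,
        hUconn, hSconn⟩, ?_, Or.inl hviA, Or.inl hvjA, hv1U⟩
      rw [kcutU_eq s t A B]
      omega
    exact s3_contra s t v1 vi vj hA' hB' hYmem (termPts_union_subset s t A B)

lemma t3_mem_S3 {X : Set V} (hX : X ∈ T3set s t v1 vi vj) :
    X ∈ S3set s t v1 vi vj := by
  obtain ⟨m, hm, rfl⟩ := hX
  exact sInter_mem_of_inter_closed (s3_inter_closed s t v1 vi vj)
    (tlevel_subset s t _ m) hm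

end L51
namespace L51
variable {V E : Type} (s t : E → V)

lemma nested_term_mem {A B Z : Set V} (hAB : A ⊆ B) (hBZ : B ⊆ Z) {e : E}
    (heA : e ∈ TermPts s t A) (heZ : e ∈ TermPts s t Z) : e ∈ TermPts s t B := by
  rcases heA with ⟨h1, h2⟩ | ⟨h1, h2⟩ <;> rcases heZ with ⟨g1, g2⟩ | ⟨g1, g2⟩
  · exact Or.inl ⟨hAB h1, fun h => g2 (hBZ h)⟩
  · exact absurd (hBZ (hAB h1)) g2
  · exact absurd (hBZ (hAB h1)) g2
  · exact Or.inr ⟨hAB h1, fun h => g2 (hBZ h)⟩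

lemma not_term_of_subsets {X Y Z : Set V} (hX : X ⊆ Z) (hY : Y ⊆ Z) {e : E}
    (he : e ∈ cross s t X Y) : e ∉ TermPts s t Z := by
  rcases he with ⟨h1, h2⟩ | ⟨h1, h2⟩ <;> rintro (⟨g1, g2⟩ | ⟨g1, g2⟩)
  · exact g2 (hY h2)
  · exact g2 (hX h1)
  · exact g2 (hX h2)
  · exact g2 (hY h1)

lemma no_edge_to_SZ {Q S Z : Set V} (hQZ : Q ⊆ Z) (hQS : Disjoint Q S) {e : E}
    (he : e ∈ cross s t Q S) (heZ : e ∈ TermPts s t Z) {v : V}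
    (hv1 : v = s e ∨ v = t e) (hvS : v ∈ S) (hvZ : v ∈ Z) : False := by
  rcases he with ⟨h1, h2⟩ | ⟨h1, h2⟩
  · rcases hv1 with rfl | rfl
    · exact hQS.ne_of_mem h1 hvS rfl
    · rcases heZ with ⟨g1, g2⟩ | ⟨g1, g2⟩
      · exact g2 hvZ
      · exact g2 (hQZ h1)
  · rcases hv1 with rfl | rfl
    · rcases heZ with ⟨g1, g2⟩ | ⟨g1, g2⟩
      · exact g2 (hQZ h2)
      · exact g2 hvZ
    · exact hQS.ne_of_mem h2 hvS rfl

end L51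
/-- Lemma 5.1: for a tail `Z` with `k_Z ≥ 3`, there are no `Z`-terminal tails
`W ∈ T²_{i,j}` and `W' ∈ T³_{i,j}` with `W ∪ W' ⊆ Z`. -/
theorem stmt_14 {V E : Type} [Fintype V] [Fintype E] (s t : E → V)
    (hC : ConnOn s t Set.univ) (v1 vi vj : V) (Z : Set V)
    (hZ : IsTail s t Z) (hk : 3 ≤ kcut s t Z) :
    ¬ ∃ W ∈ T2set s t v1 vi vj, ∃ W' ∈ T3set s t v1 vi vj,
        TermPts s t W ∩ TermPts s t Z ≠ ∅ ∧
        TermPts s t W' ∩ TermPts s t Z ≠ ∅ ∧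
        W ∪ W' ⊆ Z := by
  rintro ⟨A, hWT2, B, hW'T3, hTW, hTW', hsub⟩
  obtain ⟨hZsc, hZconn, hZcconn⟩ := hZ
  have hWS2 := L51.t2_mem_S2 s t v1 vi vj hWT2
  have hW'S3 := L51.t3_mem_S3 s t v1 vi vj hW'T3
  obtain ⟨⟨hsubA, hconnA, hconnAc⟩, hkA, hviA, hvjA, hv1A⟩ := hWS2
  obtain ⟨⟨hsubB, hconnB, hconnBc⟩, hkB, hviB, hvjB, hv1B, hfB⟩ := hW'S3
  have hAZ : A ⊆ Z := fun x hx => hsub (Or.inl hx)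
  have hBZ : B ⊆ Z := fun x hx => hsub (Or.inr hx)
  have hfree : TermPts s t B ∩ TermPts s t A = ∅ := hfB A hWT2
  have hTWne : (TermPts s t A ∩ TermPts s t Z).Nonempty :=
    Set.nonempty_iff_ne_empty.mpr hTW
  have hTW'ne : (TermPts s t B ∩ TermPts s t Z).Nonempty :=
    Set.nonempty_iff_ne_empty.mpr hTW'
  by_cases hAB : A ⊆ B
  · obtain ⟨e, heA, heZ⟩ := hTWne
    have heB := L51.nested_term_mem s t hAB hBZ heA heZ
    exact Set.eq_empty_iff_forall_notMem.mp hfree e ⟨heB, heA⟩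
  by_cases hBA : B ⊆ A
  · obtain ⟨e, heB, heZ⟩ := hTW'ne
    have heA := L51.nested_term_mem s t hBA hAZ heB heZ
    exact Set.eq_empty_iff_forall_notMem.mp hfree e ⟨heB, heA⟩
  -- crossing case
  have hP : (A ∩ B).Nonempty := ⟨vi, hviA, hviB⟩
  have hQ : (A \ B).Nonempty := by
    rw [Set.not_subset] at hAB
    obtain ⟨x, h1, h2⟩ := hAB
    exact ⟨x, h1, h2⟩
  have hR : (B \ A).Nonempty := by
    rw [Set.not_subset] at hBA
    obtain ⟨x, h1, h2⟩ := hBA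
    exact ⟨x, h1, h2⟩
  have hS : ((A ∪ B)ᶜ).Nonempty := ⟨v1, fun h => h.elim hv1A hv1B⟩
  obtain ⟨ha, hb, hc, hd⟩ :=
    L51.crossing_ge_one s t hconnA hconnAc hconnB hconnBc hP hQ hR hS
  have eA := L51.kcutA_eq s t A B
  have eB := L51.kcutB_eq s t A B
  rw [hkA] at eA
  rw [hkB] at eB
  rw [show (L51.cross s t (B \ A) (A \ B)).ncard
      = (L51.cross s t (A \ B) (B \ A)).ncard from by rw [L51.cross_comm]] at eB
  have hb1 : (L51.cross s t (A ∩ B) (B \ A)).ncard = 1 := by omega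
  have hc1 : (L51.cross s t (A \ B) ((A ∪ B)ᶜ)).ncard = 1 := by omega
  have hx0 : (L51.cross s t (A ∩ B) ((A ∪ B)ᶜ)).ncard = 0 := by omega
  have hy0 : (L51.cross s t (A \ B) (B \ A)).ncard = 0 := by omega
  have hPSempty : L51.cross s t (A ∩ B) ((A ∪ B)ᶜ) = ∅ :=
    (Set.ncard_eq_zero (Set.toFinite _)).mp hx0
  have hQRempty : L51.cross s t (A \ B) (B \ A) = ∅ :=
    (Set.ncard_eq_zero (Set.toFinite _)).mp hy0
  have hTermA : TermPts s t A =
      L51.cross s t (A ∩ B) (B \ A) ∪ L51.cross s t (A \ B) ((A ∪ B)ᶜ) := by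
    rw [L51.termA_decomp s t A B, hPSempty, hQRempty, Set.union_empty, Set.empty_union]
  have hTermB : TermPts s t B =
      L51.cross s t (A ∩ B) (A \ B) ∪ L51.cross s t (B \ A) ((A ∪ B)ᶜ) := by
    rw [L51.termB_decomp s t A B, hPSempty]
    rw [show L51.cross s t (B \ A) (A \ B) = ∅ from by
      rw [L51.cross_comm]; exact hQRempty]
    rw [Set.union_empty, Set.empty_union]
  have hPZ : A ∩ B ⊆ Z := Set.inter_subset_left.trans hAZ
  have hQZ : A \ B ⊆ Z := Set.diff_subset.trans hAZ
  have hRZ : B \ A ⊆ Z := Set.diff_subset.trans hBZ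
  obtain ⟨e, heA, heZ⟩ := hTWne
  have heQS : e ∈ L51.cross s t (A \ B) ((A ∪ B)ᶜ) := by
    rw [hTermA] at heA
    rcases heA with h | h
    · exact absurd heZ (L51.not_term_of_subsets s t hPZ hRZ h)
    · exact h
  obtain ⟨e', heB', heZ'⟩ := hTW'ne
  have heRS : e' ∈ L51.cross s t (B \ A) ((A ∪ B)ᶜ) := by
    rw [hTermB] at heB'
    rcases heB' with h | h
    · exact absurd heZ' (L51.not_term_of_subsets s t hPZ hQZ h)
    · exact h
  by_cases had : (L51.cross s t (A ∩ B) (A \ B)).ncard = 1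
  · -- a = 1 : A ∩ B is a 2-tail, contradiction via Corollary 4.2
    obtain ⟨f, hf⟩ := Set.ncard_eq_one.mp had
    obtain ⟨hPconn, hQconn⟩ := L51.connP_via_A s t hconnA hf
    have hPcconn := L51.connPc_via_Q s t hconnAc hQconn ⟨e, heQS⟩
    have hv1P : v1 ∉ A ∩ B := fun h => hv1A h.1
    have hPS2 : A ∩ B ∈ S2set s t v1 vi vj := by
      refine ⟨⟨⟨hP, fun h => hv1P (h.symm ▸ Set.mem_univ v1)⟩, hPconn, hPcconn⟩, ?_,
        ⟨hviA, hviB⟩, ⟨hvjA, hvjB⟩, hv1P⟩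
      rw [L51.kcutP_eq s t A B]
      omega
    obtain ⟨X, hXT2, hXsub, g, hgX, hgP⟩ := L51.cor42 s t v1 vi vj hPS2
    rcases L51.termPts_inter_subset s t A B hgP with h | h
    · have hXneA : X ≠ A := by
        intro hEq
        obtain ⟨q, hqA, hqB⟩ := hQ
        exact hqB (hXsub (hEq ▸ hqA)).2
      exact Set.eq_empty_iff_forall_notMem.mp
        (L51.t2set_pairwise_free s t v1 vi vj hXT2 hWT2 hXneA) g ⟨hgX, h⟩
    · exact Set.eq_empty_iff_forall_notMem.mp (hfB X hXT2) g ⟨h, hgX⟩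
  · -- a = 2, d = 1
    have hd1 : (L51.cross s t (B \ A) ((A ∪ B)ᶜ)).ncard = 1 := by omega
    have hQSsing : L51.cross s t (A \ B) ((A ∪ B)ᶜ) = {e} := by
      obtain ⟨g, hg⟩ := Set.ncard_eq_one.mp hc1
      rw [hg] at heQS ⊢
      rw [Set.mem_singleton_iff] at heQS
      rw [heQS]
    have hRSsing : L51.cross s t (B \ A) ((A ∪ B)ᶜ) = {e'} := by
      obtain ⟨g, hg⟩ := Set.ncard_eq_one.mp hd1
      rw [hg] at heRS ⊢
      rw [Set.mem_singleton_iff] at heRS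
      rw [heRS]
    have hcrossU : L51.cross s t (A ∪ B) ((A ∪ B)ᶜ) =
        (L51.cross s t (A ∩ B) ((A ∪ B)ᶜ) ∪ L51.cross s t (A \ B) ((A ∪ B)ᶜ)) ∪
          L51.cross s t (B \ A) ((A ∪ B)ᶜ) := by
      rw [← L51.termPts_eq_cross]
      exact L51.termU_decomp s t A B
    by_cases hSZ : (Z \ (A ∪ B)).Nonempty
    · -- Z would be disconnected
      obtain ⟨z0, hz0⟩ := hSZ
      obtain ⟨g, hg⟩ := L51.exists_cross_of_connOn s t hZconn (hsub (Or.inl hviA))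
        (Or.inl hviA : vi ∈ A ∪ B) hz0.1 hz0.2
      have hg' : g ∈ L51.cross s t (A ∪ B) ((A ∪ B)ᶜ) :=
        L51.cross_mono s t Set.inter_subset_right (fun v hv => hv.2) hg
      rw [hcrossU, hPSempty, Set.empty_union, hQSsing, hRSsing] at hg'
      have hend : ∃ v, (v = s g ∨ v = t g) ∧ v ∈ Z \ (A ∪ B) := by
        rcases hg with ⟨h1, h2⟩ | ⟨h1, h2⟩
        · exact ⟨t g, Or.inr rfl, h2⟩
        · exact ⟨s g, Or.inl rfl, h1⟩
      obtain ⟨v, hv1, hvZ, hvU⟩ := hend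
      rcases hg' with hge | hge
      · rw [Set.mem_singleton_iff] at hge
        subst hge
        exact L51.no_edge_to_SZ s t hQZ (L51.d_QS A B) heQS heZ hv1 hvU hvZ
      · rw [Set.mem_singleton_iff] at hge
        subst hge
        exact L51.no_edge_to_SZ s t hRZ (L51.d_RS A B) heRS heZ' hv1 hvU hvZ
    · -- otherwise Z = A ∪ B has a cut of size 2 < 3
      rw [Set.not_nonempty_iff_eq_empty, Set.diff_eq_empty] at hSZ
      have hZU : Z = A ∪ B := Set.Subset.antisymm hSZ hsub
      rw [hZU, L51.kcutU_eq s t A B] at hk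
      omega
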